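/- For every n ≥ 1 and every basis state |x⟩ on n qubits, the fidelity between the exact QFT output |ψ_x⟩ = ⊗_{j=0}^{n−1} |μ_{0.x_j...x_0}⟩ and the truncated state |ψ̃_x⟩ = ⊗_{j=0}^{n−1} |μ_{θ̃_j}⟩, where θ̃_j keeps only the top k = 2⌈log₂(n/ε)⌉ + O(1) binary digits of 0.x_j...x_0, satisfies ‖|ψ_x⟩ − |ψ̃_x⟩‖ ≤ ε. -/

import Mathlib

open scoped Real

/-- The qubit state `|μ_θ⟩ = (|0⟩ + e^{2πiθ}|1⟩)/√2`. -/
noncomputable def muState (θ : ℝ) : Bool → ℂ := fun b =>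
  if b then Complex.exp (2 * π * Complex.I * θ) / Real.sqrt 2 else 1 / Real.sqrt 2

/-- The Hilbert norm on a tensor power of `ℂ²` realized as functions to `ℂ`. -/
noncomputable def hnorm {ι : Type*} [Fintype ι] (f : ι → ℂ) : ℝ :=
  Real.sqrt (∑ y : ι, Complex.normSq (f y))

/-- The product state `⊗_j |μ_{θ_j}⟩`. -/
noncomputable def muProd {n : ℕ} (θ : Fin n → ℝ) : (Fin n → Bool) → ℂ :=
  fun y => ∏ j, muState (θ j) (y j)

/-- The numerical value `∑ x_j 2^j` of a bit string. -/
def bitsVal {n : ℕ} (x : Fin n → Bool) : ℕ :=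
  ∑ j : Fin n, if x j then 2 ^ (j : ℕ) else 0

/-- The QFT angle `0.x_{n-j-1}…x_0` of the `j`-th output qubit. -/
noncomputable def qftAngle {n : ℕ} (x : Fin n → Bool) (j : Fin n) : ℝ :=
  ((bitsVal x % 2 ^ (n - (j : ℕ)) : ℕ) : ℝ) / (2 : ℝ) ^ (n - (j : ℕ))

/- ## Auxiliary lemmas -/

lemma hnorm_eq_norm {ι : Type*} [Fintype ι] (f : ι → ℂ) :
    hnorm f = ‖(WithLp.equiv 2 (ι → ℂ)).symm f‖ := by
  rw [hnorm, EuclideanSpace.norm_eq]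
  congr 1
  refine Finset.sum_congr rfl fun y _ => ?_
  simp [Complex.normSq_eq_norm_sq]

lemma sqrt_prod' {ι : Type*} (s : Finset ι) (f : ι → ℝ) (h : ∀ i ∈ s, 0 ≤ f i) :
    Real.sqrt (∏ i ∈ s, f i) = ∏ i ∈ s, Real.sqrt (f i) := by
  induction s using Finset.cons_induction with
  | empty => simp
  | cons a s ha ih =>
    rw [Finset.prod_cons, Finset.prod_cons, Real.sqrt_mul (h a (Finset.mem_cons_self a s)),
      ih fun i hi => h i (Finset.mem_cons_of_mem hi)]

lemma hnorm_prod {n : ℕ} (g : Fin n → Bool → ℂ) :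
    hnorm (fun y : Fin n → Bool => ∏ j, g j (y j)) = ∏ j, hnorm (g j) := by
  rw [hnorm]
  have h1 : ∀ y : Fin n → Bool, Complex.normSq (∏ j, g j (y j)) =
      ∏ j, Complex.normSq (g j (y j)) := fun y => map_prod Complex.normSq _ _
  simp_rw [h1]
  have h2 : ∑ y : Fin n → Bool, ∏ j, Complex.normSq (g j (y j)) =
      ∏ j, ∑ b, Complex.normSq (g j b) := by
    rw [← Finset.sum_prod_piFinset Finset.univ, Fintype.piFinset_univ]
  rw [h2, sqrt_prod' _ _ (fun i _ => Finset.sum_nonneg fun b _ => Complex.normSq_nonneg _)]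
  rfl

lemma abs_exp_I_sub_one (t : ℝ) :
    ‖Complex.exp (t * Complex.I) - 1‖ ≤ |t| := by
  have hre : (Complex.exp (t * Complex.I)).re = Real.cos t := Complex.exp_ofReal_mul_I_re t
  have him : (Complex.exp (t * Complex.I)).im = Real.sin t := Complex.exp_ofReal_mul_I_im t
  have h1 : ‖Complex.exp (t * Complex.I) - 1‖
      = Real.sqrt ((Real.cos t - 1) ^ 2 + (Real.sin t) ^ 2) := by
    rw [Complex.norm_def, Complex.normSq_apply]
    simp [hre, him, sq]
  rw [h1]
  have hc := Real.one_sub_sq_div_two_le_cos (x := t)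
  have hs : Real.sin t ^ 2 + Real.cos t ^ 2 = 1 := Real.sin_sq_add_cos_sq t
  have h2 : (Real.cos t - 1) ^ 2 + Real.sin t ^ 2 ≤ t ^ 2 := by nlinarith
  calc Real.sqrt ((Real.cos t - 1) ^ 2 + Real.sin t ^ 2) ≤ Real.sqrt (t ^ 2) :=
        Real.sqrt_le_sqrt h2
    _ = |t| := Real.sqrt_sq_eq_abs t

lemma abs_exp_sub_exp (a b : ℝ) :
    ‖Complex.exp (2 * π * Complex.I * a) - Complex.exp (2 * π * Complex.I * b)‖
      ≤ 2 * π * |a - b| := by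
  have hfac : Complex.exp (2 * π * Complex.I * a) - Complex.exp (2 * π * Complex.I * b)
      = Complex.exp (2 * π * Complex.I * b) *
        (Complex.exp (((2 * π * (a - b) : ℝ)) * Complex.I) - 1) := by
    rw [mul_sub, ← Complex.exp_add]
    push_cast
    ring_nf
  rw [hfac, norm_mul]
  have habs1 : ‖Complex.exp (2 * π * Complex.I * b)‖ = 1 := by
    rw [Complex.norm_exp]
    norm_num [Complex.mul_re, Complex.mul_im]
  rw [habs1, one_mul]
  calc ‖Complex.exp (((2 * π * (a - b) : ℝ)) * Complex.I) - 1‖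
      ≤ |2 * π * (a - b)| := abs_exp_I_sub_one _
    _ = 2 * π * |a - b| := by
        rw [abs_mul, abs_of_nonneg (by positivity : (0:ℝ) ≤ 2 * π)]

lemma normSq_sqrt2 : Complex.normSq (Real.sqrt 2 : ℂ) = 2 := by
  rw [Complex.normSq_ofReal]
  exact Real.mul_self_sqrt (by norm_num)

lemma hnorm_muState (θ : ℝ) : hnorm (muState θ) = 1 := by
  rw [hnorm, Fintype.sum_bool]
  have habs : ‖Complex.exp (2 * π * Complex.I * θ)‖ = 1 := by
    rw [Complex.norm_exp]; norm_num [Complex.mul_re, Complex.mul_im]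
  have h1 : Complex.normSq (Complex.exp (2 * π * Complex.I * θ)) = 1 := by
    rw [Complex.normSq_eq_norm_sq, habs]; norm_num
  simp only [muState, Bool.false_eq_true, if_true, if_false, Complex.normSq_div, h1,
    normSq_sqrt2, Complex.normSq_one]
  norm_num

lemma hnorm_muState_sub (θ θ' : ℝ) :
    hnorm (fun b => muState θ b - muState θ' b) ≤ 2 * π * |θ - θ'| := by
  rw [hnorm, Fintype.sum_bool]
  simp only [muState, Bool.false_eq_true, if_true, if_false, sub_self, map_zero, add_zero,
    div_sub_div_same, Complex.normSq_div, normSq_sqrt2]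
  have key := abs_exp_sub_exp θ θ'
  have hnn : 0 ≤ ‖Complex.exp (2 * π * Complex.I * θ) -
      Complex.exp (2 * π * Complex.I * θ')‖ := norm_nonneg _
  rw [Complex.normSq_eq_norm_sq]
  calc Real.sqrt (‖Complex.exp (2 * π * Complex.I * θ) -
        Complex.exp (2 * π * Complex.I * θ')‖ ^ 2 / 2)
      ≤ Real.sqrt ((2 * π * |θ - θ'|) ^ 2) := by
        apply Real.sqrt_le_sqrt
        have h3 : ‖Complex.exp (2 * π * Complex.I * θ) -
            Complex.exp (2 * π * Complex.I * θ')‖ ^ 2 ≤ (2 * π * |θ - θ'|) ^ 2 := by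
          apply sq_le_sq' <;> nlinarith
        nlinarith [h3, sq_nonneg (‖Complex.exp (2 * π * Complex.I * θ) -
          Complex.exp (2 * π * Complex.I * θ')‖)]
    _ = 2 * π * |θ - θ'| := Real.sqrt_sq (by positivity)

lemma hnorm_sum_le {ι κ : Type*} [Fintype ι] (s : Finset κ) (F : κ → ι → ℂ) :
    hnorm (∑ m ∈ s, F m) ≤ ∑ m ∈ s, hnorm (F m) := by
  simp_rw [hnorm_eq_norm]
  have h : (WithLp.equiv 2 (ι → ℂ)).symm (∑ m ∈ s, F m)
      = ∑ m ∈ s, (WithLp.equiv 2 (ι → ℂ)).symm (F m) := by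
    induction s using Finset.cons_induction with
    | empty => rfl
    | cons a s ha ih => rw [Finset.sum_cons, Finset.sum_cons, ← ih]; rfl
  rw [h]
  exact norm_sum_le _ _

lemma hnorm_muProd_sub {n : ℕ} (θ θ' : Fin n → ℝ) (δ : ℝ)
    (hδ : ∀ j, |θ j - θ' j| ≤ δ) :
    hnorm (fun y => muProd θ y - muProd θ' y) ≤ n * (2 * π * δ) := by
  classical
  set φ : ℕ → Fin n → ℝ := fun m j => if (j : ℕ) < m then θ' j else θ j with hφ
  have hφ0 : φ 0 = θ := by funext j; simp [hφ]
  have hφn : φ n = θ' := by funext j; simp [hφ, j.isLt]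
  have tele : (fun y => muProd θ y - muProd θ' y)
      = ∑ m ∈ Finset.range n, fun y => muProd (φ m) y - muProd (φ (m + 1)) y := by
    funext y
    rw [Finset.sum_apply]
    have := Finset.sum_range_sub' (fun m => muProd (φ m) y) n
    rw [hφ0, hφn] at this
    exact this.symm
  rw [tele]
  calc hnorm (∑ m ∈ Finset.range n, fun y => muProd (φ m) y - muProd (φ (m + 1)) y)
      ≤ ∑ m ∈ Finset.range n, hnorm (fun y => muProd (φ m) y - muProd (φ (m + 1)) y) :=
        hnorm_sum_le _ _
    _ ≤ ∑ _m ∈ Finset.range n, (2 * π * δ) := by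
        apply Finset.sum_le_sum
        intro m hm
        have hmn : m < n := Finset.mem_range.1 hm
        set jm : Fin n := ⟨m, hmn⟩ with hjm
        set g : Fin n → Bool → ℂ := fun j =>
          if j = jm then (fun b => muState (θ jm) b - muState (θ' jm) b)
          else muState (φ m j) with hg
        have hfun : (fun y => muProd (φ m) y - muProd (φ (m + 1)) y)
            = fun y : Fin n → Bool => ∏ j, g j (y j) := by
          funext y
          have hrest : ∏ j ∈ Finset.univ.erase jm, muState (φ (m + 1) j) (y j)
              = ∏ j ∈ Finset.univ.erase jm, muState (φ m j) (y j) := by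
            refine Finset.prod_congr rfl fun j hj => ?_
            have hne : (j : ℕ) ≠ m := fun h => (Finset.mem_erase.1 hj).1 (Fin.ext h)
            have hiff : ((j : ℕ) < m + 1) ↔ ((j : ℕ) < m) := by omega
            simp only [hφ, hiff]
          have hA : muProd (φ m) y
              = muState (θ jm) (y jm) * ∏ j ∈ Finset.univ.erase jm, muState (φ m j) (y j) := by
            rw [muProd, ← Finset.mul_prod_erase Finset.univ _ (Finset.mem_univ jm)]
            congr 2
            simp [hφ, hjm]
          have hB : muProd (φ (m + 1)) y
              = muState (θ' jm) (y jm) * ∏ j ∈ Finset.univ.erase jm, muState (φ m j) (y j) := by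
            rw [muProd, ← Finset.mul_prod_erase Finset.univ _ (Finset.mem_univ jm), hrest]
            congr 2
            simp [hφ, hjm]
          have hC : ∏ j, g j (y j)
              = (muState (θ jm) (y jm) - muState (θ' jm) (y jm)) *
                  ∏ j ∈ Finset.univ.erase jm, muState (φ m j) (y j) := by
            rw [← Finset.mul_prod_erase Finset.univ _ (Finset.mem_univ jm)]
            congr 1
            · simp [hg]
            · refine Finset.prod_congr rfl fun j hj => ?_
              simp [hg, (Finset.mem_erase.1 hj).1]
          rw [hA, hB, hC]
          ring
        rw [hfun, hnorm_prod,
          ← Finset.mul_prod_erase Finset.univ _ (Finset.mem_univ jm)]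
        have h1 : ∏ j ∈ Finset.univ.erase jm, hnorm (g j) = 1 := by
          apply Finset.prod_eq_one
          intro j hj
          simp only [hg, if_neg (Finset.mem_erase.1 hj).1]
          exact hnorm_muState _
        rw [h1, mul_one]
        simp only [hg, if_pos rfl]
        calc hnorm (fun b => muState (θ jm) b - muState (θ' jm) b)
            ≤ 2 * π * |θ jm - θ' jm| := hnorm_muState_sub _ _
          _ ≤ 2 * π * δ := by
              have := hδ jm
              have hπ : (0:ℝ) < 2 * π := by positivity
              nlinarith
    _ = n * (2 * π * δ) := by
        rw [Finset.sum_const, Finset.card_range]; simp [nsmul_eq_mul]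

/-- there is a constant (the `O(1)`) such that for every `n ≥ 1`, every
`ε > 0` and every basis state `|x⟩`, if `k = 2⌈log₂(n/ε)⌉ + O(1)` and each angle of the
exact QFT output `|ψ_x⟩ = ⊗_j |μ_{0.x_j…x_0}⟩` is truncated to `k` binary digits
(so that it changes by at most `2^{−k}`), then `‖|ψ_x⟩ − |ψ̃_x⟩‖ ≤ ε`. -/
theorem truncated_qft_state_close :
    ∃ c : ℕ, ∀ (n k : ℕ), 1 ≤ n → ∀ ε : ℝ, 0 < ε →
      k ≥ 2 * Nat.clog 2 ⌈(n : ℝ) / ε⌉₊ + c →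
      ∀ (x : Fin n → Bool) (θ' : Fin n → ℝ),
        (∀ j, |qftAngle x j - θ' j| ≤ (2 : ℝ) ^ (-(k : ℤ))) →
        hnorm (fun y => muProd (qftAngle x) y - muProd θ' y) ≤ ε := by
  refine ⟨3, fun n k hn ε hε hk x θ' hθ' => ?_⟩
  set L := Nat.clog 2 ⌈(n : ℝ) / ε⌉₊ with hL
  have hδ0 : (0:ℝ) ≤ (2 : ℝ) ^ (-(k : ℤ)) := by positivity
  have hmain := hnorm_muProd_sub (qftAngle x) θ' ((2 : ℝ) ^ (-(k : ℤ))) hθ'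
  refine hmain.trans ?_
  -- arithmetic
  have hA1 : (1:ℝ) ≤ (2:ℝ) ^ L := one_le_pow₀ (by norm_num)
  have hA2 : (n : ℝ) / ε ≤ (2:ℝ) ^ L := by
    calc (n : ℝ) / ε ≤ (⌈(n : ℝ) / ε⌉₊ : ℝ) := Nat.le_ceil _
      _ ≤ ((2 ^ L : ℕ) : ℝ) := by
          exact_mod_cast Nat.le_pow_clog (by norm_num) _
      _ = (2:ℝ) ^ L := by push_cast; ring
  have hn' : (0:ℝ) < (n : ℝ) := by exact_mod_cast hn
  have hkpow : (8:ℝ) * ((2:ℝ) ^ L) ^ 2 ≤ (2:ℝ) ^ k := by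
    calc (8:ℝ) * ((2:ℝ) ^ L) ^ 2 = (2:ℝ) ^ (2 * L + 3) := by
          rw [pow_add, two_mul, pow_add]; ring
      _ ≤ (2:ℝ) ^ k := pow_le_pow_right₀ (by norm_num) hk
  have hzpow : (2:ℝ) ^ (-(k : ℤ)) = ((2:ℝ) ^ k)⁻¹ := by
    rw [zpow_neg, zpow_natCast]
  have h2k : (0:ℝ) < (2:ℝ) ^ k := by positivity
  have hnle : (n : ℝ) ≤ ε * (2:ℝ) ^ L := by
    rw [div_le_iff₀ hε] at hA2; linarith
  have key : (n : ℝ) * (2 * π) ≤ ε * (2:ℝ) ^ k := by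
    nlinarith [Real.pi_le_four, hε.le, hA1, hnle, hkpow,
      mul_le_mul_of_nonneg_left hkpow hε.le]
  rw [hzpow]
  calc (n : ℝ) * (2 * π * ((2:ℝ) ^ k)⁻¹) = (n : ℝ) * (2 * π) * ((2:ℝ) ^ k)⁻¹ := by ring
    _ ≤ ε * (2:ℝ) ^ k * ((2:ℝ) ^ k)⁻¹ :=
        mul_le_mul_of_nonneg_right key (by positivity)
    _ = ε := by field_simp
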